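/- (Theorem 2, prediction-step MSE bound under an unknown DGP.) Let (Ω, 𝔽, ℙ) be a probability space, P ∈ ℝ^{k×k} symmetric positive definite, Φ ∈ ℝ^{k×k}, ω ∈ ℝ^k and ε > 0. Let u, w, r : Ω → ℝ^k be square-integrable random vectors with 𝔼[‖w‖²] ≤ s_ω² and 𝔼[‖r‖²] ≤ q². Then 𝔼[‖Φu + (Φ − I)w + r‖²_P] ≤ (1 + ε²)·‖Φ‖²_P·𝔼[‖u‖²_P] + (1 + 1/ε²)·λ_max(P)·(‖I − Φ‖₂·s_ω + q)², where ‖·‖₂ is the spectral norm. Equivalently, with u = θ_upd − θ*, w = θ* − ω and r = θ* − θ*₊ (so that the prediction error is (I−Φ)ω + Φθ_upd − θ*₊ = Φu + (Φ−I)w + r), the P-weighted mean squared prediction error is bounded by the stated quantity. -/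

import Mathlib

open Matrix

/-- Smallest eigenvalue of a (Hermitian) real matrix; junk value 0 otherwise. -/
noncomputable def lMin {k : ℕ} (A : Matrix (Fin k) (Fin k) ℝ) : ℝ :=
  letI := Classical.propDecidable A.IsHermitian
  if h : A.IsHermitian then ⨅ i, h.eigenvalues i else 0

/-- Largest eigenvalue of a (Hermitian) real matrix; junk value 0 otherwise. -/
noncomputable def lMax {k : ℕ} (A : Matrix (Fin k) (Fin k) ℝ) : ℝ :=
  letI := Classical.propDecidable A.IsHermitian
  if h : A.IsHermitian then ⨆ i, h.eigenvalues i else 0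

/-- P-weighted squared vector norm `‖x‖_P² = xᵀ P x`. -/
def wq {k : ℕ} (P : Matrix (Fin k) (Fin k) ℝ) (x : Fin k → ℝ) : ℝ := x ⬝ᵥ P *ᵥ x

/-- Induced P-weighted matrix norm `‖A‖_P = sup_{x ≠ 0} ‖Ax‖_P / ‖x‖_P`. -/
noncomputable def wMatNorm {k : ℕ} (P A : Matrix (Fin k) (Fin k) ℝ) : ℝ :=
  sSup {r : ℝ | ∃ x : Fin k → ℝ, x ≠ 0 ∧ r = Real.sqrt (wq P (A *ᵥ x)) / Real.sqrt (wq P x)}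


/-- Euclidean (spectral) operator norm `‖A‖₂ = sup_{x ≠ 0} ‖Ax‖/‖x‖` (Euclidean vector norms). -/
noncomputable def spec2Norm {k : ℕ} (A : Matrix (Fin k) (Fin k) ℝ) : ℝ :=
  sSup {r : ℝ | ∃ x : Fin k → ℝ, x ≠ 0 ∧
    r = Real.sqrt (A *ᵥ x ⬝ᵥ A *ᵥ x) / Real.sqrt (x ⬝ᵥ x)}

open MeasureTheory

/- ### Auxiliary lemmas -/

lemma quad_eigen_repr {k : ℕ} {P : Matrix (Fin k) (Fin k) ℝ} (hP : P.IsHermitian) (x : Fin k → ℝ) :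
    ∃ y : Fin k → ℝ, y ⬝ᵥ y = x ⬝ᵥ x ∧ x ⬝ᵥ P *ᵥ x = ∑ i, hP.eigenvalues i * (y i)^2 := by
  classical
  set U : Matrix (Fin k) (Fin k) ℝ := (hP.eigenvectorUnitary : Matrix (Fin k) (Fin k) ℝ) with hU
  have hUs : U * star U = 1 := (Matrix.mem_unitaryGroup_iff).mp hP.eigenvectorUnitary.2
  refine ⟨star U *ᵥ x, ?_, ?_⟩
  · have h1 : star U *ᵥ x = x ᵥ* U := by
      have : star U = Uᵀ := by
        ext i j; simp [Matrix.star_apply]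
      rw [this, mulVec_transpose]
    calc (star U *ᵥ x) ⬝ᵥ (star U *ᵥ x) = (x ᵥ* U) ⬝ᵥ (star U *ᵥ x) := by rw [h1]
      _ = ((x ᵥ* U) ᵥ* star U) ⬝ᵥ x := by rw [dotProduct_mulVec]
      _ = (x ᵥ* (U * star U)) ⬝ᵥ x := by rw [vecMul_vecMul]
      _ = x ⬝ᵥ x := by rw [hUs, vecMul_one]
  · conv_lhs => rw [hP.spectral_theorem, Unitary.conjStarAlgAut_apply, ← hU]
    have h1 : star U *ᵥ x = x ᵥ* U := by
      have : star U = Uᵀ := by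
        ext i j; simp [Matrix.star_apply]
      rw [this, mulVec_transpose]
    have : (U * diagonal (RCLike.ofReal ∘ hP.eigenvalues) * star U) *ᵥ x
        = U *ᵥ (diagonal (RCLike.ofReal ∘ hP.eigenvalues) *ᵥ (star U *ᵥ x)) := by
      rw [mulVec_mulVec, mulVec_mulVec]
    rw [this, dotProduct_mulVec, ← h1]
    simp only [dotProduct, mulVec_diagonal, Function.comp]
    apply Finset.sum_congr rfl; intros
    rw [show ((RCLike.ofReal : ℝ → ℝ) = id) from funext fun r => rfl]; simp; ring

lemma quad_le_lMax {k : ℕ} {P : Matrix (Fin k) (Fin k) ℝ} (hP : P.IsHermitian) (x : Fin k → ℝ) :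
    x ⬝ᵥ P *ᵥ x ≤ lMax P * (x ⬝ᵥ x) := by
  classical
  obtain ⟨y, hyy, hrep⟩ := quad_eigen_repr hP x
  have hlM : lMax P = ⨆ i, hP.eigenvalues i := by
    rw [lMax]; rw [dif_pos hP]
  rw [hrep, hlM, ← hyy]
  have hb : BddAbove (Set.range hP.eigenvalues) := Set.Finite.bddAbove (Set.finite_range _)
  calc ∑ i, hP.eigenvalues i * (y i)^2 ≤ ∑ i, (⨆ j, hP.eigenvalues j) * (y i)^2 := by
        apply Finset.sum_le_sum
        intro i _
        exact mul_le_mul_of_nonneg_right (le_ciSup hb i) (sq_nonneg _)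
    _ = (⨆ j, hP.eigenvalues j) * (y ⬝ᵥ y) := by
        rw [← Finset.mul_sum]; congr 1; simp [dotProduct, pow_two]

lemma lMin_mul_le_quad {k : ℕ} {P : Matrix (Fin k) (Fin k) ℝ} (hP : P.IsHermitian) (x : Fin k → ℝ) :
    lMin P * (x ⬝ᵥ x) ≤ x ⬝ᵥ P *ᵥ x := by
  classical
  obtain ⟨y, hyy, hrep⟩ := quad_eigen_repr hP x
  have hlM : lMin P = ⨅ i, hP.eigenvalues i := by
    rw [lMin]; rw [dif_pos hP]
  rw [hrep, hlM, ← hyy]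
  have hb : BddBelow (Set.range hP.eigenvalues) := Set.Finite.bddBelow (Set.finite_range _)
  calc (⨅ j, hP.eigenvalues j) * (y ⬝ᵥ y) = ∑ i, (⨅ j, hP.eigenvalues j) * (y i)^2 := by
        rw [← Finset.mul_sum]; congr 1; simp [dotProduct, pow_two]
    _ ≤ ∑ i, hP.eigenvalues i * (y i)^2 := by
        apply Finset.sum_le_sum
        intro i _
        exact mul_le_mul_of_nonneg_right (ciInf_le hb i) (sq_nonneg _)

lemma lMin_pos {k : ℕ} [NeZero k] {P : Matrix (Fin k) (Fin k) ℝ} (hP : P.PosDef) : 0 < lMin P := by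
  classical
  have hH := hP.isHermitian
  have : lMin P = ⨅ i, hH.eigenvalues i := by rw [lMin]; rw [dif_pos hH]
  rw [this]
  obtain ⟨i, hi⟩ := exists_eq_ciInf_of_finite (f := hH.eigenvalues)
  rw [← hi]
  exact hP.eigenvalues_pos i

lemma lMax_pos {k : ℕ} [NeZero k] {P : Matrix (Fin k) (Fin k) ℝ} (hP : P.PosDef) : 0 < lMax P := by
  classical
  have hH := hP.isHermitian
  have : lMax P = ⨆ i, hH.eigenvalues i := by rw [lMax]; rw [dif_pos hH]
  rw [this]
  obtain ⟨i, hi⟩ := exists_eq_ciSup_of_finite (f := hH.eigenvalues)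
  rw [← hi]
  exact hP.eigenvalues_pos i

lemma frobenius_bound {k : ℕ} (A : Matrix (Fin k) (Fin k) ℝ) (x : Fin k → ℝ) :
    (A *ᵥ x) ⬝ᵥ (A *ᵥ x) ≤ (∑ i, ∑ j, (A i j)^2) * (x ⬝ᵥ x) := by
  classical
  have h : ∀ i, ((A *ᵥ x) i)^2 ≤ (∑ j, (A i j)^2) * (x ⬝ᵥ x) := by
    intro i
    have := Finset.sum_mul_sq_le_sq_mul_sq Finset.univ (fun j => A i j) x
    simpa [mulVec, dotProduct, pow_two] using this
  calc (A *ᵥ x) ⬝ᵥ (A *ᵥ x) = ∑ i, ((A *ᵥ x) i)^2 := by simp [dotProduct, pow_two]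
    _ ≤ ∑ i, (∑ j, (A i j)^2) * (x ⬝ᵥ x) := Finset.sum_le_sum fun i _ => h i
    _ = (∑ i, ∑ j, (A i j)^2) * (x ⬝ᵥ x) := by rw [Finset.sum_mul]

lemma young_quad {k : ℕ} {Q : Matrix (Fin k) (Fin k) ℝ}
    (hQ : ∀ z : Fin k → ℝ, 0 ≤ z ⬝ᵥ Q *ᵥ z) {t : ℝ} (ht : 0 < t) (a b : Fin k → ℝ) :
    (a + b) ⬝ᵥ Q *ᵥ (a + b) ≤ (1 + t) * (a ⬝ᵥ Q *ᵥ a) + (1 + 1/t) * (b ⬝ᵥ Q *ᵥ b) := by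
  have hst : 0 < Real.sqrt t := Real.sqrt_pos.mpr ht
  have key := hQ (Real.sqrt t • a - (Real.sqrt t)⁻¹ • b)
  have hsq : Real.sqrt t * Real.sqrt t = t := Real.mul_self_sqrt ht.le
  have e1 : ∀ (c d : Fin k → ℝ), (c + d) ⬝ᵥ Q *ᵥ (c + d)
      = c ⬝ᵥ Q *ᵥ c + c ⬝ᵥ Q *ᵥ d + d ⬝ᵥ Q *ᵥ c + d ⬝ᵥ Q *ᵥ d := by
    intro c d
    simp [mulVec_add, add_dotProduct, dotProduct_add]
    ring
  have e2 : (Real.sqrt t • a - (Real.sqrt t)⁻¹ • b) ⬝ᵥ Q *ᵥ (Real.sqrt t • a - (Real.sqrt t)⁻¹ • b)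
      = t * (a ⬝ᵥ Q *ᵥ a) - (a ⬝ᵥ Q *ᵥ b + b ⬝ᵥ Q *ᵥ a) + t⁻¹ * (b ⬝ᵥ Q *ᵥ b) := by
    simp [sub_dotProduct, dotProduct_sub, mulVec_sub, mulVec_smul, smul_dotProduct,
      dotProduct_smul, smul_eq_mul]
    field_simp
    ring_nf
    rw [Real.sq_sqrt ht.le]
    rw [show √t ^ 4 = (√t ^ 2) ^ 2 by ring, Real.sq_sqrt ht.le]
    ring
  rw [e1]
  rw [e2] at key
  have h1 : a ⬝ᵥ Q *ᵥ b + b ⬝ᵥ Q *ᵥ a ≤ t * (a ⬝ᵥ Q *ᵥ a) + t⁻¹ * (b ⬝ᵥ Q *ᵥ b) := by linarith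
  rw [one_div]
  linarith

lemma sSup_ratio_bound {k : ℕ} (f g : (Fin k → ℝ) → ℝ)
    (hf0 : f 0 = 0) (hg0 : g 0 = 0)
    (hfnn : ∀ x, 0 ≤ f x) (hgnn : ∀ x, 0 ≤ g x)
    (hgpos : ∀ x : Fin k → ℝ, x ≠ 0 → 0 < g x)
    (C : ℝ) (hC : 0 ≤ C) (hfg : ∀ x, f x ≤ C * g x) :
    0 ≤ sSup {r : ℝ | ∃ x : Fin k → ℝ, x ≠ 0 ∧ r = Real.sqrt (f x) / Real.sqrt (g x)} ∧
    ∀ x, f x ≤ (sSup {r : ℝ | ∃ x : Fin k → ℝ, x ≠ 0 ∧ r = Real.sqrt (f x) / Real.sqrt (g x)})^2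
      * g x := by
  set S := {r : ℝ | ∃ x : Fin k → ℝ, x ≠ 0 ∧ r = Real.sqrt (f x) / Real.sqrt (g x)} with hS
  set M := sSup S with hM
  have hbdd : BddAbove S := by
    refine ⟨Real.sqrt C, ?_⟩
    rintro r ⟨x, hx, rfl⟩
    have hgx : 0 < Real.sqrt (g x) := Real.sqrt_pos.mpr (hgpos x hx)
    rw [div_le_iff₀ hgx]
    calc Real.sqrt (f x) ≤ Real.sqrt (C * g x) := Real.sqrt_le_sqrt (hfg x)
      _ = Real.sqrt C * Real.sqrt (g x) := Real.sqrt_mul hC _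
  have hMnn : 0 ≤ M := by
    by_cases hne : S.Nonempty
    · obtain ⟨r, x, hx, hr⟩ := hne
      have : 0 ≤ r := by
        rw [hr]; positivity
      exact this.trans (le_csSup hbdd ⟨x, hx, hr⟩)
    · rw [hM]
      rw [Set.not_nonempty_iff_eq_empty.mp hne, Real.sSup_empty]
  refine ⟨hMnn, fun x => ?_⟩
  by_cases hx : x = 0
  · subst hx; rw [hf0, hg0]; simp
  · have hmem : Real.sqrt (f x) / Real.sqrt (g x) ∈ S := ⟨x, hx, rfl⟩
    have hle : Real.sqrt (f x) / Real.sqrt (g x) ≤ M := le_csSup hbdd hmem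
    have hgx : 0 < Real.sqrt (g x) := Real.sqrt_pos.mpr (hgpos x hx)
    have h1 : Real.sqrt (f x) ≤ M * Real.sqrt (g x) := (div_le_iff₀ hgx).mp hle
    have h2 : Real.sqrt (f x) ^ 2 ≤ (M * Real.sqrt (g x))^2 := by
      apply sq_le_sq' _ h1
      have : 0 ≤ Real.sqrt (f x) := Real.sqrt_nonneg _
      nlinarith [mul_nonneg hMnn hgx.le]
    rw [Real.sq_sqrt (hfnn x)] at h2
    calc f x ≤ (M * Real.sqrt (g x))^2 := h2
      _ = M^2 * g x := by rw [mul_pow, Real.sq_sqrt (hgnn x)]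

lemma dotProduct_self_nonneg' {k : ℕ} (x : Fin k → ℝ) : 0 ≤ x ⬝ᵥ x :=
  Finset.sum_nonneg fun i _ => mul_self_nonneg _

lemma dotProduct_self_pos' {k : ℕ} {x : Fin k → ℝ} (hx : x ≠ 0) : 0 < x ⬝ᵥ x := by
  obtain ⟨i, hi⟩ := Function.ne_iff.mp hx
  have hi' : x i ≠ 0 := by simpa using hi
  have : (0:ℝ) < x i * x i := mul_self_pos.mpr hi'
  exact Finset.sum_pos' (fun j _ => mul_self_nonneg _) ⟨i, Finset.mem_univ i, this⟩

lemma le_of_forall_delta (c d e : ℝ) (he : 0 ≤ e) (h : ∀ δ : ℝ, 0 < δ → c ≤ d + δ * e) :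
    c ≤ d := by
  rcases he.eq_or_lt with he0 | hepos
  · have := h 1 one_pos; rw [← he0] at this; linarith
  · by_contra hlt
    push_neg at hlt
    have hδ : 0 < (c - d) / (2 * e) := div_pos (by linarith) (by positivity)
    have h2 := h _ hδ
    have h3 : (c - d) / (2 * e) * e = (c - d) / 2 := by
      field_simp
    rw [h3] at h2
    linarith

lemma young_opt (a b L c d : ℝ) (ha : 0 ≤ a) (hb : 0 ≤ b) (hL : 0 ≤ L)
    (h : ∀ δ : ℝ, 0 < δ → c ≤ d + L * ((1 + δ) * a^2 + (1 + 1/δ) * b^2)) :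
    c ≤ d + L * (a + b)^2 := by
  rcases ha.eq_or_lt with ha0 | hapos
  · have key : ∀ δ : ℝ, 0 < δ → c ≤ (d + L * b^2) + δ * (L * b^2) := by
      intro δ hδ
      have := h (1/δ) (by positivity)
      rw [← ha0] at this
      have h2 : (1:ℝ) / (1/δ) = δ := by field_simp
      rw [h2] at this
      nlinarith
    have := le_of_forall_delta c (d + L * b^2) (L * b^2) (by positivity) key
    rw [← ha0]
    nlinarith
  · rcases hb.eq_or_lt with hb0 | hbpos
    · have key : ∀ δ : ℝ, 0 < δ → c ≤ (d + L * a^2) + δ * (L * a^2) := by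
        intro δ hδ
        have := h δ hδ
        rw [← hb0] at this
        nlinarith
      have := le_of_forall_delta c (d + L * a^2) (L * a^2) (by positivity) key
      rw [← hb0]
      nlinarith
    · have := h (b/a) (by positivity)
      have heq : (1 + b/a) * a^2 + (1 + 1/(b/a)) * b^2 = (a + b)^2 := by
        field_simp
        ring
      rw [heq] at this
      exact this

lemma wMatNorm_spec {k : ℕ} {P : Matrix (Fin k) (Fin k) ℝ} (Φ : Matrix (Fin k) (Fin k) ℝ)
    (hP : P.PosDef) :
    0 ≤ wMatNorm P Φ ∧ ∀ x, wq P (Φ *ᵥ x) ≤ (wMatNorm P Φ)^2 * wq P x := by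
  classical
  have hPsd : ∀ z : Fin k → ℝ, 0 ≤ wq P z := by
    intro z
    have := hP.posSemidef.dotProduct_mulVec_nonneg z
    simpa [wq] using this
  have hPpos : ∀ z : Fin k → ℝ, z ≠ 0 → 0 < wq P z := by
    intro z hz
    have := hP.dotProduct_mulVec_pos hz
    simpa [wq] using this
  obtain ⟨C, hC, hfg⟩ : ∃ C : ℝ, 0 ≤ C ∧ ∀ x : Fin k → ℝ, wq P (Φ *ᵥ x) ≤ C * wq P x := by
    rcases Nat.eq_zero_or_pos k with hk | hk
    · subst hk
      refine ⟨0, le_refl _, fun x => ?_⟩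
      have hx0 : x = 0 := Subsingleton.elim _ _
      simp [hx0, wq]
    · haveI : NeZero k := ⟨hk.ne'⟩
      set F : ℝ := ∑ i, ∑ j, (Φ i j)^2 with hF
      have hFnn : 0 ≤ F := Finset.sum_nonneg fun i _ => Finset.sum_nonneg fun j _ => sq_nonneg _
      have hlMaxP := lMax_pos hP
      have hlMinP := lMin_pos hP
      refine ⟨lMax P * F / lMin P, by positivity, fun x => ?_⟩
      have h1 : wq P (Φ *ᵥ x) ≤ lMax P * ((Φ *ᵥ x) ⬝ᵥ (Φ *ᵥ x)) := by
        have := quad_le_lMax hP.isHermitian (Φ *ᵥ x)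
        simpa [wq] using this
      have h2 : (Φ *ᵥ x) ⬝ᵥ (Φ *ᵥ x) ≤ F * (x ⬝ᵥ x) := frobenius_bound Φ x
      have h3 : lMin P * (x ⬝ᵥ x) ≤ wq P x := by
        have := lMin_mul_le_quad hP.isHermitian x
        simpa [wq] using this
      have hxx : 0 ≤ x ⬝ᵥ x := dotProduct_self_nonneg' x
      have hc : lMin P * (lMax P * F / lMin P) = lMax P * F := by
        field_simp
      nlinarith [mul_le_mul_of_nonneg_left h2 hlMaxP.le,
        mul_le_mul_of_nonneg_left h3 (by positivity : (0:ℝ) ≤ lMax P * F / lMin P)]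
  have := sSup_ratio_bound (fun x => wq P (Φ *ᵥ x)) (fun x => wq P x)
    (by simp [wq]) (by simp [wq]) (fun x => hPsd _) (fun x => hPsd _) hPpos C hC hfg
  exact this

lemma spec2Norm_spec {k : ℕ} (A : Matrix (Fin k) (Fin k) ℝ) :
    0 ≤ spec2Norm A ∧ ∀ x, (A *ᵥ x) ⬝ᵥ (A *ᵥ x) ≤ (spec2Norm A)^2 * (x ⬝ᵥ x) := by
  classical
  have hC : (0:ℝ) ≤ ∑ i, ∑ j, (A i j)^2 :=
    Finset.sum_nonneg fun i _ => Finset.sum_nonneg fun j _ => sq_nonneg _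
  have := sSup_ratio_bound (fun x => (A *ᵥ x) ⬝ᵥ (A *ᵥ x)) (fun x => x ⬝ᵥ x)
    (by simp) (by simp) (fun x => dotProduct_self_nonneg' _) (fun x => dotProduct_self_nonneg' _)
    (fun x hx => dotProduct_self_pos' hx) _ hC (frobenius_bound A)
  exact this

lemma lMax_nonneg_of_posDef {k : ℕ} {P : Matrix (Fin k) (Fin k) ℝ} (hP : P.PosDef) :
    0 ≤ lMax P := by
  rcases Nat.eq_zero_or_pos k with hk | hk
  · subst hk
    rw [lMax, dif_pos hP.isHermitian]
    exact le_of_eq (Real.iSup_of_isEmpty _).symm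
  · haveI : NeZero k := ⟨hk.ne'⟩
    exact (lMax_pos hP).le

lemma pointwise_bound {k : ℕ} {P Φ : Matrix (Fin k) (Fin k) ℝ} (hP : P.PosDef)
    {ε δ : ℝ} (hε : 0 < ε) (hδ : 0 < δ) (uv wv rv : Fin k → ℝ) :
    wq P (Φ *ᵥ uv + (Φ - 1) *ᵥ wv + rv) ≤
      (1 + ε^2) * (wMatNorm P Φ)^2 * wq P uv
      + ((1 + 1/ε^2) * lMax P * ((1 + δ) * (spec2Norm (1 - Φ))^2) * (wv ⬝ᵥ wv)
      + (1 + 1/ε^2) * lMax P * (1 + 1/δ) * (rv ⬝ᵥ rv)) := by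
  have hPsd : ∀ z : Fin k → ℝ, 0 ≤ z ⬝ᵥ P *ᵥ z := by
    intro z
    have := hP.posSemidef.dotProduct_mulVec_nonneg z
    simpa using this
  have hlMax0 : 0 ≤ lMax P := lMax_nonneg_of_posDef hP
  set a : Fin k → ℝ := Φ *ᵥ uv with ha
  set b : Fin k → ℝ := (Φ - 1) *ᵥ wv + rv with hb
  have hadd : Φ *ᵥ uv + (Φ - 1) *ᵥ wv + rv = a + b := by rw [add_assoc]
  rw [hadd]
  have step1 := young_quad hPsd (t := ε^2) (by positivity) a b
  have step2 : a ⬝ᵥ P *ᵥ a ≤ (wMatNorm P Φ)^2 * (uv ⬝ᵥ P *ᵥ uv) := by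
    have := (wMatNorm_spec Φ hP).2 uv
    simpa only [wq, ha] using this
  have step3 : b ⬝ᵥ P *ᵥ b ≤ lMax P * (b ⬝ᵥ b) := quad_le_lMax hP.isHermitian b
  have honevec : ∀ z : Fin k → ℝ, z ⬝ᵥ (1 : Matrix (Fin k) (Fin k) ℝ) *ᵥ z = z ⬝ᵥ z := by
    intro z; rw [one_mulVec]
  have step4 : b ⬝ᵥ b ≤ (1 + δ) * (((Φ - 1) *ᵥ wv) ⬝ᵥ ((Φ - 1) *ᵥ wv)) + (1 + 1/δ) * (rv ⬝ᵥ rv) := by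
    have := young_quad (Q := (1 : Matrix (Fin k) (Fin k) ℝ))
      (fun z => by rw [honevec]; exact dotProduct_self_nonneg' z) hδ ((Φ - 1) *ᵥ wv) rv
    simpa only [honevec, one_mulVec, hb] using this
  have step5 : ((Φ - 1) *ᵥ wv) ⬝ᵥ ((Φ - 1) *ᵥ wv) = ((1 - Φ) *ᵥ wv) ⬝ᵥ ((1 - Φ) *ᵥ wv) := by
    rw [show (Φ - 1 : Matrix (Fin k) (Fin k) ℝ) = -(1 - Φ) from (neg_sub _ _).symm,
      neg_mulVec, neg_dotProduct, dotProduct_neg, neg_neg]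
  have step6 : ((1 - Φ) *ᵥ wv) ⬝ᵥ ((1 - Φ) *ᵥ wv) ≤ (spec2Norm (1 - Φ))^2 * (wv ⬝ᵥ wv) :=
    (spec2Norm_spec (1 - Φ)).2 wv
  have h4' : b ⬝ᵥ b ≤ (1 + δ) * ((spec2Norm (1 - Φ))^2 * (wv ⬝ᵥ wv)) + (1 + 1/δ) * (rv ⬝ᵥ rv) := by
    rw [step5] at step4
    have := mul_le_mul_of_nonneg_left step6 (by positivity : (0:ℝ) ≤ 1 + δ)
    linarith
  have h3' : b ⬝ᵥ P *ᵥ b ≤ lMax P * ((1 + δ) * ((spec2Norm (1 - Φ))^2 * (wv ⬝ᵥ wv))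
      + (1 + 1/δ) * (rv ⬝ᵥ rv)) :=
    step3.trans (mul_le_mul_of_nonneg_left h4' hlMax0)
  have h2' := mul_le_mul_of_nonneg_left step2 (by positivity : (0:ℝ) ≤ 1 + ε^2)
  have h3'' := mul_le_mul_of_nonneg_left h3' (by positivity : (0:ℝ) ≤ 1 + 1/ε^2)
  simp only [wq]
  nlinarith [step1, h2', h3'']


/-- Theorem 2, prediction-step MSE bound under an unknown DGP.
For square-integrable random vectors `u, w, r` with `𝔼‖w‖² ≤ s_ω²` and `𝔼‖r‖² ≤ q²`
(`s_ω, q ≥ 0`), and any `ε > 0`,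
`𝔼‖Φu + (Φ − I)w + r‖²_P ≤ (1 + ε²)‖Φ‖²_P 𝔼‖u‖²_P + (1 + 1/ε²)λ_max(P)(‖I − Φ‖₂ s_ω + q)²`. -/
theorem prediction_mse_unknown_dgp {k : ℕ}
    {Ω : Type*} [MeasurableSpace Ω] (μ : Measure Ω) [IsProbabilityMeasure μ]
    (P Φ : Matrix (Fin k) (Fin k) ℝ) (hP : P.PosDef) (ε : ℝ) (hε : 0 < ε)
    (u w r : Ω → (Fin k → ℝ)) (sω q : ℝ) (hsω : 0 ≤ sω) (hq : 0 ≤ q)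
    (hintu : Integrable (fun x => wq P (u x)) μ)
    (hintw : Integrable (fun x => w x ⬝ᵥ w x) μ)
    (hintr : Integrable (fun x => r x ⬝ᵥ r x) μ)
    (hintall : Integrable (fun x => wq P (Φ *ᵥ u x + (Φ - 1) *ᵥ w x + r x)) μ)
    (hw : ∫ x, w x ⬝ᵥ w x ∂μ ≤ sω ^ 2)
    (hr : ∫ x, r x ⬝ᵥ r x ∂μ ≤ q ^ 2) :
    ∫ x, wq P (Φ *ᵥ u x + (Φ - 1) *ᵥ w x + r x) ∂μ ≤
      (1 + ε ^ 2) * wMatNorm P Φ ^ 2 * ∫ x, wq P (u x) ∂μ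
        + (1 + 1 / ε ^ 2) * lMax P * (spec2Norm (1 - Φ) * sω + q) ^ 2 := by
  have hPsd : ∀ z : Fin k → ℝ, 0 ≤ wq P z := by
    intro z
    have := hP.posSemidef.dotProduct_mulVec_nonneg z
    simpa [wq] using this
  have hlMax0 : 0 ≤ lMax P := lMax_nonneg_of_posDef hP
  have hS0 : 0 ≤ spec2Norm (1 - Φ) := (spec2Norm_spec (1 - Φ)).1
  have hIu : 0 ≤ ∫ x, wq P (u x) ∂μ := integral_nonneg fun x => hPsd _
  set S : ℝ := spec2Norm (1 - Φ) with hS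
  set M : ℝ := wMatNorm P Φ with hM
  set Iu : ℝ := ∫ x, wq P (u x) ∂μ with hIudef
  have key : ∀ δ : ℝ, 0 < δ →
      ∫ x, wq P (Φ *ᵥ u x + (Φ - 1) *ᵥ w x + r x) ∂μ ≤
        (1 + ε ^ 2) * M ^ 2 * Iu
          + (1 + 1 / ε ^ 2) * lMax P * ((1 + δ) * (S * sω)^2 + (1 + 1/δ) * q^2) := by
    intro δ hδ
    set c1 : ℝ := (1 + ε^2) * M^2 with hc1
    set c2 : ℝ := (1 + 1/ε^2) * lMax P * ((1 + δ) * S^2) with hc2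
    set c3 : ℝ := (1 + 1/ε^2) * lMax P * (1 + 1/δ) with hc3
    have hc2nn : 0 ≤ c2 := by
      rw [hc2]
      apply mul_nonneg (mul_nonneg (by positivity) hlMax0) (by positivity)
    have hc3nn : 0 ≤ c3 := by
      rw [hc3]
      apply mul_nonneg (mul_nonneg (by positivity) hlMax0) (by positivity)
    have hGint : Integrable
        (fun x => c1 * wq P (u x) + (c2 * (w x ⬝ᵥ w x) + c3 * (r x ⬝ᵥ r x))) μ :=
      (hintu.const_mul c1).add ((hintw.const_mul c2).add (hintr.const_mul c3))
    have hmono := integral_mono_of_nonneg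
      (Filter.Eventually.of_forall fun x => hPsd (Φ *ᵥ u x + (Φ - 1) *ᵥ w x + r x))
      hGint
      (Filter.Eventually.of_forall fun x => pointwise_bound hP hε hδ (u x) (w x) (r x))
    have hint2 : Integrable (fun x => c2 * (w x ⬝ᵥ w x)) μ := hintw.const_mul c2
    have hint3 : Integrable (fun x => c3 * (r x ⬝ᵥ r x)) μ := hintr.const_mul c3
    have hint23 : Integrable (fun x => c2 * (w x ⬝ᵥ w x) + c3 * (r x ⬝ᵥ r x)) μ := hint2.add hint3
    have hint1 : Integrable (fun x => c1 * wq P (u x)) μ := hintu.const_mul c1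
    have hsplit : ∫ x, (c1 * wq P (u x) + (c2 * (w x ⬝ᵥ w x) + c3 * (r x ⬝ᵥ r x))) ∂μ
        = c1 * Iu + (c2 * ∫ x, w x ⬝ᵥ w x ∂μ + c3 * ∫ x, r x ⬝ᵥ r x ∂μ) := by
      rw [integral_add hint1 hint23, integral_add hint2 hint3,
        integral_const_mul, integral_const_mul, integral_const_mul]
    rw [hsplit] at hmono
    have hw' : c2 * ∫ x, w x ⬝ᵥ w x ∂μ ≤ c2 * sω^2 := mul_le_mul_of_nonneg_left hw hc2nn
    have hr' : c3 * ∫ x, r x ⬝ᵥ r x ∂μ ≤ c3 * q^2 := mul_le_mul_of_nonneg_left hr hc3nn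
    have : ∫ x, wq P (Φ *ᵥ u x + (Φ - 1) *ᵥ w x + r x) ∂μ ≤ c1 * Iu + (c2 * sω^2 + c3 * q^2) := by
      linarith
    rw [hc1, hc2, hc3] at this
    nlinarith [this]
  have := young_opt (S * sω) q ((1 + 1 / ε ^ 2) * lMax P)
    (∫ x, wq P (Φ *ᵥ u x + (Φ - 1) *ᵥ w x + r x) ∂μ)
    ((1 + ε ^ 2) * M ^ 2 * Iu)
    (mul_nonneg hS0 hsω) hq (mul_nonneg (by positivity) hlMax0) key
  nlinarith [this]
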